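/- For every integer n ≥ 0, F_{3n+1} equals the sum, over all compositions (a_1, …, a_k) of n, of 3^{#{i : a_i = 1}} · 4^{#{i : a_i ≠ 1}}, where #{i : a_i = 1} is the number of parts equal to 1 and #{i : a_i ≠ 1} is the number of parts greater than 1. -/

import Mathlib

open Finset

/-- weight of a list of blocks -/
def cw (l : List ℕ) : ℕ := 3 ^ (l.count 1) * 4 ^ (l.countP fun a => a ≠ 1)

lemma cw_cons (a : ℕ) (l : List ℕ) :
    cw (a :: l) = (if a = 1 then 3 else 4) * cw l := by
  by_cases h : a = 1 <;>
    simp [cw, List.count_cons, List.countP_cons, h, pow_succ] <;> ring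

lemma comp_heq {m k : ℕ} (c : Composition m) (d : Composition k) (h : m = k)
    (hb : c.blocks = d.blocks) : HEq c d := by
  subst h; exact heq_of_eq (Composition.ext hb)

lemma blocks_ne_nil {n : ℕ} (c : Composition (n + 1)) : c.blocks ≠ [] := by
  intro h
  have := c.blocks_sum
  rw [h] at this
  simp at this

lemma headI_mem {l : List ℕ} (h : l ≠ []) : l.headI ∈ l := by
  cases l with
  | nil => exact absurd rfl h
  | cons a t => exact (List.mem_cons_self : a ∈ a :: t)

lemma headI_cons_tail {l : List ℕ} (h : l ≠ []) : l.headI :: l.tail = l := by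
  cases l with
  | nil => exact absurd rfl h
  | cons a t => rfl

/-- decomposition equivalence by first block -/
def compEquiv (n : ℕ) : Composition (n + 1) ≃ Σ j : Fin (n + 1), Composition j where
  toFun c :=
    ⟨⟨n + 1 - c.blocks.headI, by
        have hpos : 0 < c.blocks.headI :=
          c.blocks_pos (headI_mem <| blocks_ne_nil c)
        omega⟩,
      ⟨c.blocks.tail, fun hi => c.blocks_pos (List.mem_of_mem_tail hi), by
        have hs := c.blocks_sum
        rw [← headI_cons_tail (blocks_ne_nil c), List.sum_cons] at hs
        simp only
        omega⟩⟩
  invFun p :=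
    ⟨(n + 1 - p.1.val) :: p.2.blocks,
      fun hi => by
        rcases List.mem_cons.1 hi with h | h
        · have := p.1.isLt; omega
        · exact p.2.blocks_pos h,
      by
        have := p.2.blocks_sum
        have := p.1.isLt
        simp [List.sum_cons, this]⟩
  left_inv c := by
    have hh : 0 < c.blocks.headI := c.blocks_pos (headI_mem <| blocks_ne_nil c)
    have hle : c.blocks.headI ≤ n + 1 := by
      have hs := c.blocks_sum
      rw [← headI_cons_tail (blocks_ne_nil c), List.sum_cons] at hs
      omega
    apply Composition.ext
    simp only
    rw [show n + 1 - (n + 1 - c.blocks.headI) = c.blocks.headI by omega]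
    exact headI_cons_tail (blocks_ne_nil c)
  right_inv p := by
    rcases p with ⟨⟨j, hj⟩, d⟩
    have h1 : n + 1 - (n + 1 - j) = j := by omega
    apply Sigma.ext
    · apply Fin.ext
      simp [h1]
    · apply comp_heq
      · simp [h1]
      · simp

lemma sum_eq_fib : ∀ n : ℕ, (∑ c : Composition n, cw c.blocks) = Nat.fib (3 * n + 1) := by
  intro n
  induction n using Nat.strong_induction_on with
  | _ n ih =>
    match n with
    | 0 =>
      have hu : ∀ c : Composition 0, c.blocks = [] := by
        intro c
        have hs := c.blocks_sum
        cases hb : c.blocks with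
        | nil => rfl
        | cons a t =>
          have := c.blocks_pos (hb ▸ (List.mem_cons_self : a ∈ a :: t))
          rw [hb, List.sum_cons] at hs
          omega
      haveI : Unique (Composition 0) :=
        ⟨⟨default⟩, fun c => Composition.ext (by rw [hu, hu])⟩
      rw [Fintype.sum_unique]
      simp [cw, hu]
    | (m + 1) =>
      -- decompose by first block
      rw [← Equiv.sum_comp (compEquiv m).symm (fun c => cw c.blocks)]
      rw [← Finset.univ_sigma_univ, Finset.sum_sigma]
      have hterm : ∀ j : Fin (m + 1),
          (∑ d : Composition j, cw (((compEquiv m).symm ⟨j, d⟩).blocks)) =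
          (if m + 1 - j.val = 1 then 3 else 4) * Nat.fib (3 * j.val + 1) := by
        intro j
        have : ∀ d : Composition j,
            cw (((compEquiv m).symm ⟨j, d⟩).blocks) =
            (if m + 1 - j.val = 1 then 3 else 4) * cw d.blocks := by
          intro d
          rw [show ((compEquiv m).symm ⟨j, d⟩).blocks = (m + 1 - j.val) :: d.blocks from rfl]
          exact cw_cons _ _
        rw [Finset.sum_congr rfl (fun d _ => this d), ← Finset.mul_sum,
          ih j.val j.isLt]
      rw [Finset.sum_congr rfl (fun j _ => hterm j)]
      rw [Fin.sum_univ_eq_sum_range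
        (fun j => (if m + 1 - j = 1 then 3 else 4) * Nat.fib (3 * j + 1))]
      rw [Finset.sum_range_succ]
      have hlast : m + 1 - m = 1 := by omega
      rw [hlast]
      have hrest : ∀ j ∈ Finset.range m,
          (if m + 1 - j = 1 then 3 else 4) * Nat.fib (3 * j + 1) =
          4 * Nat.fib (3 * j + 1) := by
        intro j hjm
        have := Finset.mem_range.1 hjm
        rw [if_neg (by omega)]
      rw [Finset.sum_congr rfl hrest, ← Finset.mul_sum, if_pos rfl]
      -- now goal: 4 * ∑_{j<m} fib(3j+1) + 3 * fib(3m+1) = fib(3(m+1)+1)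
      have key : 2 * ∑ j ∈ Finset.range m, Nat.fib (3 * j + 1) = Nat.fib (3 * m) := by
        clear ih hterm hrest hlast
        induction m with
        | zero => simp
        | succ k ihk =>
          rw [Finset.sum_range_succ, Nat.mul_add, ihk]
          have h1 := Nat.fib_add_two (n := 3 * k)
          have h2 := Nat.fib_add_two (n := 3 * k + 1)
          have e1 : 3 * (k + 1) = 3 * k + 2 + 1 := by ring
          rw [e1, Nat.fib_add_two (n := 3 * k + 1)]
          ring_nf at h1 h2 ⊢
          omega
      have h1 := Nat.fib_add_two (n := 3 * m)
      have h2 := Nat.fib_add_two (n := 3 * m + 1)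
      have h3 := Nat.fib_add_two (n := 3 * m + 2)
      have e1 : 3 * (m + 1) + 1 = 3 * m + 2 + 2 := by ring
      rw [e1, h3]
      ring_nf at h1 h2 h3 key ⊢
      omega

theorem fib_three_mul_add_one_eq_sum_compositions (n : ℕ) :
    Nat.fib (3 * n + 1) =
      ∑ c : Composition n,
        3 ^ (c.blocks.count 1) * 4 ^ (c.blocks.countP fun a => a ≠ 1) := by
  rw [← sum_eq_fib n]
  rfl
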